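/- Let g(t) = exp(−t^{−β}) for t > 0 and g(t) = 0 for t ≤ 0. Define u : ℝ × ℤ → ℝ by u(t,0) = g(t); for x ≥ 1, u(t,x) = g(t) + Σ_{k=1}^∞ [g^{(2k)}(t)/(2k)!] · (x+k)(x+k−1)···(x+1)·x·(x−1)···(x−k+1); and u(t,x) = u(t,−x−1) for x ≤ −1. Then for each fixed x the sum is finite (terms with k > x vanish), u solves ∂_t² u(t,x) = u(t,x+1) + u(t,x−1) − 2u(t,x) on ℝ × ℤ, and ∂_t^k u(0,x) = 0 for all k ∈ ℕ₀ and x ∈ ℤ. -/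

import Mathlib

/-- The flat function `g(t) = exp(−t^{−β})` for `t > 0`, `g(t) = 0` for `t ≤ 0`. -/
noncomputable def gfun (β : ℝ) (t : ℝ) : ℝ :=
  if 0 < t then Real.exp (-(t ^ (-β))) else 0

/-- The product `(x+k)(x+k−1)···(x−k+1)` of the `2k` consecutive integers from
`x−k+1` up to `x+k`. -/
noncomputable def consecProd (x : ℤ) (k : ℕ) : ℝ :=
  ∏ j ∈ Finset.range (2 * k), ((x + k - j : ℤ) : ℝ)

/-- The Tychonoff-type function: `u(t,0) = g(t)`,
`u(t,x) = g(t) + Σ_{k≥1} g^{(2k)}(t)/(2k)! · (x+k)···(x−k+1)` for `x ≥ 1`,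
and `u(t,x) = u(t,−x−1)` for `x ≤ −1` (note the product vanishes for `x = 0`, `k ≥ 1`,
so the formula below covers all three cases). -/
noncomputable def uline (β : ℝ) (t : ℝ) (x : ℤ) : ℝ :=
  gfun β t + ∑' k : ℕ,
    iteratedDeriv (2 * (k + 1)) (gfun β) t / (Nat.factorial (2 * (k + 1))) *
      consecProd (if 0 ≤ x then x else -x - 1) (k + 1)

namespace UlineAux

open Real Filter Topology Finset

/-- Auxiliary family: `t^(-a) e^{-t^{-β}}` on `t > 0`, `0` elsewhere. -/
noncomputable def E (β a : ℝ) (t : ℝ) : ℝ :=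
  if 0 < t then t ^ (-a) * Real.exp (-(t ^ (-β))) else 0

lemma E_nonpos {β a t : ℝ} (ht : t ≤ 0) : E β a t = 0 := by
  simp [E, not_lt.mpr ht]

lemma gfun_eq (β : ℝ) : gfun β = E β 0 := by
  funext t
  simp only [gfun, E, neg_zero, Real.rpow_zero, one_mul]

lemma tendsto_E {β : ℝ} (hβ : 0 < β) (a : ℝ) :
    Tendsto (fun t : ℝ => t ^ (-a) * Real.exp (-(t ^ (-β)))) (𝓝[>] (0:ℝ)) (𝓝 0) := by
  have h1 : Tendsto (fun t : ℝ => t ^ (-β)) (𝓝[>] (0:ℝ)) atTop := by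
    refine ((tendsto_rpow_atTop hβ).comp tendsto_inv_nhdsGT_zero).congr' ?_
    filter_upwards [self_mem_nhdsWithin] with t ht
    have ht' : (0:ℝ) < t := ht
    simp only [Function.comp_apply]
    rw [Real.inv_rpow ht'.le, ← Real.rpow_neg ht'.le]
  have h2 := (tendsto_rpow_mul_exp_neg_mul_atTop_nhds_zero (a / β) 1 one_pos).comp h1
  refine h2.congr' ?_
  filter_upwards [self_mem_nhdsWithin] with t ht
  have ht' : (0:ℝ) < t := ht
  simp only [Function.comp_apply]
  rw [← Real.rpow_mul ht'.le, show (-β) * (a / β) = -a by field_simp, neg_one_mul]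

lemma hasDerivAt_E {β : ℝ} (hβ : 0 < β) (a t : ℝ) :
    HasDerivAt (E β a) (-a * E β (a + 1) t + β * E β (a + β + 1) t) t := by
  rcases lt_trichotomy t 0 with ht | rfl | ht
  · have hval : -a * E β (a + 1) t + β * E β (a + β + 1) t = 0 := by
      rw [E_nonpos ht.le, E_nonpos ht.le]; ring
    rw [hval]
    have hev : (fun _ : ℝ => (0:ℝ)) =ᶠ[𝓝 t] E β a := by
      filter_upwards [Iio_mem_nhds ht] with s hs
      exact (E_nonpos (le_of_lt hs)).symm
    exact (hasDerivAt_const t 0).congr_of_eventuallyEq hev.symm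
  · have hval : -a * E β (a + 1) 0 + β * E β (a + β + 1) 0 = 0 := by
      rw [E_nonpos le_rfl, E_nonpos le_rfl]; ring
    rw [hval, hasDerivAt_iff_tendsto_slope]
    rw [← nhdsLT_sup_nhdsGT, tendsto_sup]
    constructor
    · refine Tendsto.congr' ?_ tendsto_const_nhds
      filter_upwards [self_mem_nhdsWithin] with s hs
      have : E β a s = 0 := E_nonpos (le_of_lt hs)
      simp [slope, this, E_nonpos le_rfl]
    · refine Tendsto.congr' ?_ (tendsto_E hβ (a + 1))
      filter_upwards [self_mem_nhdsWithin] with s hs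
      have hs' : (0:ℝ) < s := hs
      have : E β a s = s ^ (-a) * Real.exp (-(s ^ (-β))) := if_pos hs'
      rw [slope_def_field, E_nonpos le_rfl, this]
      rw [show -(a+1) = -a + (-1) by ring, Real.rpow_add hs', Real.rpow_neg_one]
      field_simp
      rw [sub_zero, sub_zero, mul_div_cancel_left₀ _ hs'.ne']
  · have hev : (fun s : ℝ => s ^ (-a) * Real.exp (-(s ^ (-β)))) =ᶠ[𝓝 t] E β a := by
      filter_upwards [Ioi_mem_nhds ht] with s hs
      exact (if_pos hs).symm
    have h1 : HasDerivAt (fun s : ℝ => s ^ (-a)) (-a * t ^ (-a - 1)) t :=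
      Real.hasDerivAt_rpow_const (Or.inl ht.ne')
    have h2 : HasDerivAt (fun s : ℝ => s ^ (-β)) (-β * t ^ (-β - 1)) t :=
      Real.hasDerivAt_rpow_const (Or.inl ht.ne')
    have h3 : HasDerivAt (fun s : ℝ => Real.exp (-(s ^ (-β))))
        (Real.exp (-(t ^ (-β))) * -(-β * t ^ (-β - 1))) t :=
      (Real.hasDerivAt_exp _).comp t h2.neg
    have h4 := h1.fun_mul h3
    refine HasDerivAt.congr_of_eventuallyEq ?_ hev.symm
    convert h4 using 1
    · rfl
    rw [E, if_pos ht, E, if_pos ht]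
    rw [show -(a+1) = -a - 1 by ring,
      show -(a + β + 1) = -a + (-β - 1) by ring, Real.rpow_add ht]
    ring

/-- The span of the `E β a`. -/
noncomputable def M (β : ℝ) : Submodule ℝ (ℝ → ℝ) :=
  Submodule.span ℝ {f | ∃ a : ℝ, f = E β a}

lemma mem_M_props {β : ℝ} (hβ : 0 < β) :
    ∀ f ∈ M β, Differentiable ℝ f ∧ deriv f ∈ M β ∧ f 0 = 0 := by
  intro f hf
  induction hf using Submodule.span_induction with
  | mem f hf =>
    obtain ⟨a, rfl⟩ := hf
    refine ⟨fun t => (hasDerivAt_E hβ a t).differentiableAt, ?_, E_nonpos le_rfl⟩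
    have : deriv (E β a) = (-a) • E β (a + 1) + β • E β (a + β + 1) := by
      funext t
      rw [(hasDerivAt_E hβ a t).deriv]
      simp [smul_eq_mul]
    rw [this]
    exact Submodule.add_mem _
      (Submodule.smul_mem _ _ (Submodule.subset_span ⟨a + 1, rfl⟩))
      (Submodule.smul_mem _ _ (Submodule.subset_span ⟨a + β + 1, rfl⟩))
  | zero =>
    refine ⟨differentiable_const 0, ?_, rfl⟩
    have : deriv (0 : ℝ → ℝ) = 0 := by
      funext t; exact deriv_const t 0
    rw [this]; exact Submodule.zero_mem _
  | add f g hf hg ihf ihg =>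
    refine ⟨ihf.1.add ihg.1, ?_, by simp [ihf.2.2, ihg.2.2]⟩
    have : deriv (f + g) = deriv f + deriv g := by
      funext t
      exact deriv_add (ihf.1 t) (ihg.1 t)
    rw [this]; exact Submodule.add_mem _ ihf.2.1 ihg.2.1
  | smul c f hf ih =>
    refine ⟨ih.1.const_smul c, ?_, by simp [ih.2.2]⟩
    have : deriv (c • f) = c • deriv f := by
      funext t
      have : (c • f) = fun s => c * f s := rfl
      rw [this, deriv_const_mul c (ih.1 t)]
      rfl
    rw [this]; exact Submodule.smul_mem _ _ ih.2.1

lemma iter_mem {β : ℝ} (hβ : 0 < β) (n : ℕ) : iteratedDeriv n (gfun β) ∈ M β := by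
  induction n with
  | zero => rw [iteratedDeriv_zero, gfun_eq]; exact Submodule.subset_span ⟨0, rfl⟩
  | succ n ih => rw [iteratedDeriv_succ]; exact (mem_M_props hβ _ ih).2.1

lemma D_diff {β : ℝ} (hβ : 0 < β) (n : ℕ) :
    Differentiable ℝ (iteratedDeriv n (gfun β)) :=
  (mem_M_props hβ _ (iter_mem hβ n)).1

lemma D_zero {β : ℝ} (hβ : 0 < β) (n : ℕ) : iteratedDeriv n (gfun β) 0 = 0 :=
  (mem_M_props hβ _ (iter_mem hβ n)).2.2

lemma iteratedDeriv_sum {β : ℝ} (hβ : 0 < β) (s : Finset ℕ) (c : ℕ → ℝ) (m : ℕ → ℕ)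
    (j : ℕ) :
    iteratedDeriv j (fun t => ∑ k ∈ s, c k * iteratedDeriv (m k) (gfun β) t)
      = fun t => ∑ k ∈ s, c k * iteratedDeriv (m k + j) (gfun β) t := by
  induction j with
  | zero => simp
  | succ j ih =>
    rw [iteratedDeriv_succ, ih]
    funext t
    rw [deriv_fun_sum fun k _ => ((D_diff hβ (m k + j)) t).const_mul (c k)]
    refine Finset.sum_congr rfl fun k _ => ?_
    rw [deriv_const_mul (c k) ((D_diff hβ (m k + j)) t)]
    rw [← iteratedDeriv_succ]
    rfl

/- ### consecProd lemmas -/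

lemma consecProd_zero' (x : ℤ) : consecProd x 0 = 1 := by simp [consecProd]

lemma consecProd_vanish {x : ℤ} (hx : 0 ≤ x) {k : ℕ} (h : x < k) : consecProd x k = 0 := by
  apply Finset.prod_eq_zero (i := (x + k).toNat)
  · rw [Finset.mem_range]; omega
  · rw [Int.cast_eq_zero]; omega

lemma consecProd_succ (x : ℤ) (k : ℕ) :
    consecProd x (k + 1) = ((x + k + 1 : ℤ) : ℝ) * ((x - k : ℤ) : ℝ) * consecProd x k := by
  unfold consecProd
  rw [show 2 * (k + 1) = (2 * k + 1) + 1 by ring, Finset.prod_range_succ,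
    Finset.prod_range_succ']
  have h1 : ∀ j : ℕ, ((x + ((k + 1 : ℕ) : ℤ) - ((j + 1 : ℕ) : ℤ) : ℤ) : ℝ)
      = ((x + (k : ℤ) - (j : ℤ) : ℤ) : ℝ) := by
    intro j; congr 1; push_cast; ring
  rw [Finset.prod_congr rfl fun j _ => h1 j]
  have h2 : ((x + (↑(k + 1) : ℤ) - (0 : ℕ) : ℤ) : ℝ) = ((x + k + 1 : ℤ) : ℝ) := by
    congr 1; push_cast; ring
  have h3 : ((x + (↑(k + 1) : ℤ) - (↑(2 * k + 1) : ℤ) : ℤ) : ℝ) = ((x - k : ℤ) : ℝ) := by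
    congr 1; push_cast; ring
  push_cast
  ring

lemma consecProd_addOne (x : ℤ) (k : ℕ) :
    consecProd (x + 1) (k + 1)
      = ((x + k + 2 : ℤ) : ℝ) * ((x + k + 1 : ℤ) : ℝ) * consecProd x k := by
  unfold consecProd
  rw [show 2 * (k + 1) = (2 * k + 1) + 1 by ring, Finset.prod_range_succ',
    Finset.prod_range_succ']
  have h1 : ∀ j : ℕ, ((x + 1 + ((k + 1 : ℕ) : ℤ) - ((j + 1 + 1 : ℕ) : ℤ) : ℤ) : ℝ)
      = ((x + (k : ℤ) - (j : ℤ) : ℤ) : ℝ) := by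
    intro j; congr 1; push_cast; ring
  rw [Finset.prod_congr rfl fun j _ => h1 j]
  push_cast
  ring

lemma consecProd_subOne (x : ℤ) (k : ℕ) :
    consecProd (x - 1) (k + 1)
      = ((x - k - 1 : ℤ) : ℝ) * ((x - k : ℤ) : ℝ) * consecProd x k := by
  unfold consecProd
  rw [show 2 * (k + 1) = (2 * k + 1) + 1 by ring, Finset.prod_range_succ,
    Finset.prod_range_succ]
  have h1 : ∀ j : ℕ, ((x - 1 + ((k + 1 : ℕ) : ℤ) - ((j : ℕ) : ℤ) : ℤ) : ℝ)
      = ((x + (k : ℤ) - (j : ℤ) : ℤ) : ℝ) := by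
    intro j; congr 1; push_cast; ring
  rw [Finset.prod_congr rfl fun j _ => h1 j]
  push_cast
  ring

lemma consecProd_identity (x : ℤ) (k : ℕ) :
    consecProd (x + 1) (k + 1) + consecProd (x - 1) (k + 1) - 2 * consecProd x (k + 1)
      = (2 * (k : ℝ) + 2) * (2 * (k : ℝ) + 1) * consecProd x k := by
  rw [consecProd_addOne, consecProd_subOne, consecProd_succ]
  push_cast
  ring

/- ### The finite-sum form of `uline` -/

noncomputable def F (β : ℝ) (n : ℕ) (t : ℝ) : ℝ :=
  ∑ k ∈ Finset.range (n + 1),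
    consecProd n k / (Nat.factorial (2 * k)) * iteratedDeriv (2 * k) (gfun β) t

lemma uline_eq (β : ℝ) (t : ℝ) (x : ℤ) :
    uline β t x = F β (if 0 ≤ x then x else -x - 1).toNat t := by
  set y : ℤ := if 0 ≤ x then x else -x - 1 with hy
  have hy0 : 0 ≤ y := by rw [hy]; split <;> omega
  have hyt : ((y.toNat : ℤ)) = y := Int.toNat_of_nonneg hy0
  rw [uline, tsum_eq_sum (s := Finset.range y.toNat) ?_]
  · rw [F, Finset.sum_range_succ']
    rw [show ((y.toNat : ℕ) : ℤ) = y from hyt]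
    have h0 : consecProd y 0 / (Nat.factorial (2 * 0)) * iteratedDeriv (2 * 0) (gfun β) t
        = gfun β t := by
      rw [consecProd_zero']
      norm_num
    rw [h0, add_comm]
    congr 1
    refine Finset.sum_congr rfl fun k _ => ?_
    ring
  · intro k hk
    have hky : y < (k : ℤ) + 1 := by
      rw [Finset.mem_range, not_lt] at hk; omega
    rw [consecProd_vanish hy0 (by exact_mod_cast hky), mul_zero]

lemma iteratedDeriv_F {β : ℝ} (hβ : 0 < β) (n j : ℕ) (t : ℝ) :
    iteratedDeriv j (F β n) t
      = ∑ k ∈ Finset.range (n + 1),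
          consecProd n k / (Nat.factorial (2 * k)) * iteratedDeriv (2 * k + j) (gfun β) t := by
  have := iteratedDeriv_sum hβ (Finset.range (n + 1))
    (fun k => consecProd n k / (Nat.factorial (2 * k))) (fun k => 2 * k) j
  have hF : F β n = fun t => ∑ k ∈ Finset.range (n + 1),
      consecProd n k / (Nat.factorial (2 * k)) * iteratedDeriv (2 * k) (gfun β) t := rfl
  rw [hF, this]

lemma fac_step (j : ℕ) :
    ((Nat.factorial (2 * (j + 1)) : ℝ))
      = (2 * (j : ℝ) + 2) * (2 * (j : ℝ) + 1) * (Nat.factorial (2 * j)) := by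
  rw [show 2 * (j + 1) = (2 * j + 1) + 1 by ring, Nat.factorial_succ, Nat.factorial_succ]
  push_cast
  ring

lemma wave_succ {β : ℝ} (hβ : 0 < β) (m : ℕ) (t : ℝ) :
    iteratedDeriv 2 (F β (m + 1)) t = F β (m + 2) t + F β m t - 2 * F β (m + 1) t := by
  classical
  set G : ℕ → ℝ := fun k => iteratedDeriv (2 * k) (gfun β) t with hG
  have hext : ∀ (n : ℕ), n + 1 ≤ m + 3 →
      F β n t = ∑ k ∈ Finset.range (m + 3),
        consecProd n k / (Nat.factorial (2 * k)) * G k := by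
    intro n hn
    rw [F]
    refine Finset.sum_subset (Finset.range_subset_range.mpr hn) fun k hk hk' => ?_
    rw [Finset.mem_range, not_lt] at hk'
    rw [consecProd_vanish (by positivity) (by exact_mod_cast hk'), zero_div, zero_mul]
  rw [hext (m + 2) (by omega), hext m (by omega), hext (m + 1) (by omega)]
  rw [iteratedDeriv_F hβ (m + 1) 2 t]
  rw [Finset.mul_sum, ← Finset.sum_add_distrib, ← Finset.sum_sub_distrib]
  conv_rhs => rw [show m + 3 = (m + 2) + 1 by ring, Finset.sum_range_succ']
  have h0 : consecProd (↑(m + 2)) 0 / (Nat.factorial (2 * 0)) * G 0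
      + consecProd (↑m) 0 / (Nat.factorial (2 * 0)) * G 0
      - 2 * (consecProd (↑(m + 1)) 0 / (Nat.factorial (2 * 0)) * G 0) = 0 := by
    rw [consecProd_zero', consecProd_zero', consecProd_zero']
    ring
  rw [h0, add_zero]
  refine Finset.sum_congr rfl fun j _ => ?_
  have hid := consecProd_identity ((m : ℤ) + 1) j
  rw [show ((m : ℤ) + 1) + 1 = ((m + 2 : ℕ) : ℤ) by push_cast; ring,
    show ((m : ℤ) + 1) - 1 = ((m : ℕ) : ℤ) by push_cast; ring,
    show ((m : ℤ) + 1) = ((m + 1 : ℕ) : ℤ) by push_cast; ring] at hid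
  have hfac := fac_step j
  have hne : ((Nat.factorial (2 * j) : ℝ)) ≠ 0 := by positivity
  have h1 : (2 * (j : ℝ) + 2) ≠ 0 := by positivity
  have h2 : (2 * (j : ℝ) + 1) ≠ 0 := by positivity
  have hGj : G (j + 1) = iteratedDeriv (2 * j + 2) (gfun β) t := rfl
  have hF2 : ((Nat.factorial (2 * (j + 1)) : ℝ)) ≠ 0 := by positivity
  rw [← hGj]
  rw [div_mul_eq_mul_div, div_mul_eq_mul_div, div_mul_eq_mul_div, div_mul_eq_mul_div]
  rw [← add_div, ← mul_div_assoc, ← sub_div, div_eq_div_iff hne hF2, hfac]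
  linear_combination (-(G (j + 1) * ((Nat.factorial (2 * j) : ℝ)))) * hid

lemma consecProd_one_one : consecProd 1 1 = 2 := by
  unfold consecProd
  rw [show 2 * 1 = 2 by ring]
  rw [Finset.prod_range_succ, Finset.prod_range_succ, Finset.prod_range_zero]
  norm_num

lemma wave_zero {β : ℝ} (hβ : 0 < β) (t : ℝ) :
    iteratedDeriv 2 (F β 0) t = F β 1 t - F β 0 t := by
  rw [iteratedDeriv_F hβ 0 2 t, F, F]
  rw [Finset.sum_range_succ, Finset.sum_range_succ, Finset.sum_range_succ,
    Finset.sum_range_zero, Finset.sum_range_zero]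
  rw [consecProd_zero', consecProd_zero']
  have : consecProd ((1 : ℕ) : ℤ) 1 = 2 := by exact_mod_cast consecProd_one_one
  rw [this]
  norm_num [consecProd_zero']

end UlineAux

/-- the series defining `u` is a finite sum for each fixed `x` (terms with
`k > x` vanish), `u` solves the wave equation `∂_t² u(t,x) = u(t,x+1) + u(t,x−1) − 2u(t,x)`
on `ℝ × ℤ`, and all time derivatives of `u` vanish at `t = 0`. -/
theorem uline_solves_wave (β : ℝ) (hβ : 0 < β) :
    (∀ x : ℤ, 1 ≤ x → ∀ k : ℕ, (x : ℤ) < (k : ℤ) → consecProd x k = 0) ∧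
    (∀ t : ℝ, uline β t 0 = gfun β t) ∧
    (∀ (t : ℝ) (x : ℤ), x ≤ -1 → uline β t x = uline β t (-x - 1)) ∧
    (∀ (t : ℝ) (x : ℤ),
      iteratedDeriv 2 (fun s => uline β s x) t
        = uline β t (x + 1) + uline β t (x - 1) - 2 * uline β t x) ∧
    (∀ (k : ℕ) (x : ℤ), iteratedDeriv k (fun s => uline β s x) 0 = 0) := by
  open UlineAux in
  have hfun : ∀ x : ℤ, (fun s => uline β s x) = F β (if 0 ≤ x then x else -x - 1).toNat :=
    fun x => funext fun s => uline_eq β s x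
  refine ⟨?_, ?_, ?_, ?_, ?_⟩
  · intro x hx k hk
    exact consecProd_vanish (by omega) hk
  · intro t
    rw [uline]
    have h : ∀ k : ℕ,
        iteratedDeriv (2 * (k + 1)) (gfun β) t / (Nat.factorial (2 * (k + 1))) *
          consecProd (if (0:ℤ) ≤ 0 then (0:ℤ) else -0 - 1) (k + 1) = 0 := by
      intro k
      rw [if_pos le_rfl, consecProd_vanish le_rfl (by exact_mod_cast Int.natCast_pos.mpr (k.succ_pos)), mul_zero]
    rw [tsum_congr h, tsum_zero, add_zero]
  · intro t x hx
    rw [uline, uline]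
    rw [if_neg (by omega), if_pos (by omega)]
  · intro t x
    rw [hfun x, uline_eq, uline_eq, uline_eq]
    rcases lt_trichotomy x 0 with hx | rfl | hx
    · rcases eq_or_lt_of_le (by omega : x ≤ -1) with h1 | hx2
      · subst h1
        rw [if_neg (by omega), if_pos (by omega), if_neg (by omega)]
        rw [show ((-(-1:ℤ)) - 1).toNat = 0 by rfl, show ((-1:ℤ) + 1).toNat = 0 by rfl,
          show (-((-1:ℤ) - 1) - 1).toNat = 1 by rfl]
        rw [UlineAux.wave_zero hβ]
        ring
      · have hx' : x ≤ -2 := by omega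
        set m : ℕ := (-x - 2).toNat with hm
        rw [if_neg (by omega), if_neg (by omega), if_neg (by omega)]
        rw [show (-x - 1).toNat = m + 1 by omega, show (-(x + 1) - 1).toNat = m by omega,
          show (-(x - 1) - 1).toNat = m + 2 by omega]
        rw [UlineAux.wave_succ hβ m t]
        ring
    · rw [if_pos (by omega), if_pos (by omega), if_neg (by omega)]
      rw [show ((0:ℤ)).toNat = 0 by rfl, show ((0:ℤ) + 1).toNat = 1 by rfl,
        show (-((0:ℤ) - 1) - 1).toNat = 0 by rfl]
      rw [UlineAux.wave_zero hβ]
      ring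
    · set m : ℕ := (x - 1).toNat with hm
      rw [if_pos (by omega), if_pos (by omega), if_pos (by omega)]
      rw [show x.toNat = m + 1 by omega, show (x + 1).toNat = m + 2 by omega,
        show (x - 1).toNat = m by omega]
      rw [UlineAux.wave_succ hβ m t]
  · intro k x
    rw [hfun x, iteratedDeriv_F hβ]
    refine Finset.sum_eq_zero fun j _ => ?_
    rw [D_zero hβ, mul_zero]
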